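/- Let d ≥ 2 be an integer, ε > 0, N > 0, and w ≥ 2 an integer. Define V(ε, n) = (d - 2 + e^ε) / (n · (e^ε - 1)^2). Then V(ε/w, N) > V(ε, N/w), i.e., (d - 2 + e^(ε/w)) / (N (e^(ε/w) - 1)^2) > w · (d - 2 + e^ε) / (N (e^ε - 1)^2). -/
import Mathlib

set_option maxHeartbeats 1000000


theorem stmt_4 (d : ℕ) (hd : 2 ≤ d) (ε N : ℝ) (hε : 0 < ε) (hN : 0 < N)
    (w : ℕ) (hw : 2 ≤ w) :
    ((d : ℝ) - 2 + Real.exp (ε / w)) / (N * (Real.exp (ε / w) - 1) ^ 2) >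
      (w : ℝ) * ((d : ℝ) - 2 + Real.exp ε) / (N * (Real.exp ε - 1) ^ 2) := by
  have hw0 : (0:ℝ) < w := by exact_mod_cast (show 0 < w by omega)
  have hw2 : (2:ℝ) ≤ w := by exact_mod_cast hw
  have hc : (0:ℝ) ≤ (d:ℝ) - 2 := by
    have : (2:ℝ) ≤ d := by exact_mod_cast hd
    linarith
  set a := Real.exp (ε / w) with ha
  have ha1 : 1 < a := Real.one_lt_exp_iff.mpr (by positivity)
  have haw : a ^ w = Real.exp ε := by
    rw [ha, ← Real.exp_nat_mul]
    congr 1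
    field_simp
  set b := Real.exp (((w:ℝ) - 1) * ε / (2 * w)) with hb
  have hb1 : 1 ≤ b := Real.one_le_exp
    (div_nonneg (mul_nonneg (by linarith) hε.le) (by positivity))
  have hb0 : 0 < b := by linarith
  have hab2 : b ^ 2 * a = a ^ w := by
    rw [haw, hb, ha, sq, ← Real.exp_add, ← Real.exp_add]
    congr 1
    field_simp
    ring
  set S := ∑ i ∈ Finset.range w, a ^ i with hS
  have hgeom : S * (a - 1) = a ^ w - 1 := geom_sum_mul a w
  -- termwise AM-GM
  have hterm : ∀ i ∈ Finset.range w, 2 * b ≤ a ^ (w - 1 - i) + a ^ i := by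
    intro i hi
    rw [Finset.mem_range] at hi
    have hpow : a ^ (w - 1 - i) * a ^ i = b ^ 2 := by
      rw [← pow_add]
      have hidx : w - 1 - i + i = w - 1 := by omega
      rw [hidx, ha, ← Real.exp_nat_mul, hb, sq, ← Real.exp_add]
      congr 1
      have hcast : ((w - 1 : ℕ) : ℝ) = (w : ℝ) - 1 := by
        have h1 : 1 ≤ w := by omega
        push_cast [h1]
        ring
      rw [hcast]
      field_simp
      ring
    have hx : 0 < a ^ (w - 1 - i) := by positivity
    nlinarith [sq_nonneg (a ^ (w - 1 - i) - b), hx]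
  have hSb : (w:ℝ) * b ≤ S := by
    have h2 : (2:ℝ) * ((w:ℝ) * b) ≤ 2 * S := by
      have := Finset.sum_le_sum hterm
      rw [Finset.sum_add_distrib, Finset.sum_range_reflect (fun i => a ^ i) w] at this
      simp only [Finset.sum_const, Finset.card_range, nsmul_eq_mul] at this
      linarith [this]
    linarith
  clear_value a b S
  have hS0 : 0 < S := lt_of_lt_of_le (mul_pos hw0 hb0) hSb
  have ha0 : 0 < a - 1 := by linarith
  have haw1 : 0 < a ^ w - 1 := by
    rw [← hgeom]; positivity
  have hSsq : ((w:ℝ) * b) ^ 2 ≤ S ^ 2 := by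
    apply sq_le_sq'
    · nlinarith
    · exact hSb
  have h1 : ((d:ℝ) - 2 + a) * ((w:ℝ) * b) ^ 2 ≤ ((d:ℝ) - 2 + a) * S ^ 2 :=
    mul_le_mul_of_nonneg_left hSsq (by linarith)
  have t1 : (w:ℝ) * ((d:ℝ) - 2) ≤ ((d:ℝ) - 2) * ((w:ℝ) * b) ^ 2 := by
    have hbb : (1:ℝ) ≤ b ^ 2 := by nlinarith
    have hww : (w:ℝ) ≤ (w:ℝ) ^ 2 := by nlinarith
    have hh2 : (w:ℝ) ^ 2 ≤ (w:ℝ) ^ 2 * b ^ 2 := le_mul_of_one_le_right (by positivity) hbb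
    have hh : (0:ℝ) ≤ (w:ℝ) ^ 2 * b ^ 2 - w := by linarith
    nlinarith [mul_nonneg hc hh]
  have t2 : (w:ℝ) * a ^ w < a * ((w:ℝ) * b) ^ 2 := by
    have heq : a * ((w:ℝ) * b) ^ 2 = (w:ℝ) ^ 2 * (b ^ 2 * a) := by ring
    rw [heq, hab2]
    have hwp : (0:ℝ) < (w:ℝ) ^ 2 - w := by nlinarith
    have hprod := mul_pos hwp (show (0:ℝ) < a ^ w by linarith)
    nlinarith [hprod]
  have key : (w:ℝ) * ((d:ℝ) - 2 + a ^ w) < ((d:ℝ) - 2 + a) * S ^ 2 := by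
    have e : ((d:ℝ) - 2 + a) * ((w:ℝ) * b) ^ 2 =
        ((d:ℝ) - 2) * ((w:ℝ) * b) ^ 2 + a * ((w:ℝ) * b) ^ 2 := by ring
    have e' : (w:ℝ) * ((d:ℝ) - 2 + a ^ w) =
        (w:ℝ) * ((d:ℝ) - 2) + (w:ℝ) * a ^ w := by ring
    linarith [t1, t2, h1, e, e']
  have hden1 : 0 < N * (Real.exp ε - 1) ^ 2 := by
    rw [← haw]; exact mul_pos hN (pow_pos haw1 2)
  have hden2 : 0 < N * (a - 1) ^ 2 := mul_pos hN (pow_pos ha0 2)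
  rw [gt_iff_lt, div_lt_div_iff₀ hden1 hden2]
  rw [← haw]
  have e1 : ((d:ℝ) - 2 + a) * (N * (a ^ w - 1) ^ 2) =
      (((d:ℝ) - 2 + a) * S ^ 2) * (N * (a - 1) ^ 2) := by
    rw [← hgeom]; ring
  have e2 : (w:ℝ) * ((d:ℝ) - 2 + a ^ w) * (N * (a - 1) ^ 2) =
      ((w:ℝ) * ((d:ℝ) - 2 + a ^ w)) * (N * (a - 1) ^ 2) := by ring
  rw [e1, e2]
  exact mul_lt_mul_of_pos_right key hden2
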